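/- The relational composition ↔R↔ of a strong bisimulation up to ↔ with bisimilarity on both sides is itself a strong bisimulation. -/

import Mathlib

/-- `R` is a strong bisimulation for the transition relation `Tr`. -/
def IsBisim {S L : Type*} (Tr : S → L → S → Prop) (R : S → S → Prop) : Prop :=
  ∀ s t, R s t →
    (∀ ω s', Tr s ω s' → ∃ t', Tr t ω t' ∧ R s' t') ∧
    (∀ ω t', Tr t ω t' → ∃ s', Tr s ω s' ∧ R s' t')

/-- States are strongly bisimilar iff related by some strong bisimulation. -/
def Bisim {S L : Type*} (Tr : S → L → S → Prop) (s t : S) : Prop :=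
  ∃ R, IsBisim Tr R ∧ R s t

/-- Relational composition `↔ R ↔`. -/
def CompRel' {S : Type*} (B R : S → S → Prop) (s t : S) : Prop :=
  ∃ s' t', B s s' ∧ R s' t' ∧ B t' t

/-- `R` is a strong bisimulation up to bisimilarity. -/
def IsBisimUpTo {S L : Type*} (Tr : S → L → S → Prop) (R : S → S → Prop) : Prop :=
  ∀ s t, R s t →
    (∀ ω s', Tr s ω s' → ∃ t', Tr t ω t' ∧ CompRel' (Bisim Tr) R s' t') ∧
    (∀ ω t', Tr t ω t' → ∃ s', Tr s ω s' ∧ CompRel' (Bisim Tr) R s' t')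

/-- If `R` is a strong bisimulation up to `↔`, then `↔ R ↔` is a strong
bisimulation. -/
theorem bisim_isBisim' {S L : Type*} (Tr : S → L → S → Prop) :
    IsBisim Tr (Bisim Tr) := by
  rintro s t ⟨Q, hQ, hst⟩
  obtain ⟨h1, h2⟩ := hQ s t hst
  constructor
  · intro ω s' hs'
    obtain ⟨t', ht', h⟩ := h1 ω s' hs'
    exact ⟨t', ht', Q, hQ, h⟩
  · intro ω t' ht'
    obtain ⟨s', hs', h⟩ := h2 ω t' ht'
    exact ⟨s', hs', Q, hQ, h⟩

theorem bisim_trans' {S L : Type*} (Tr : S → L → S → Prop) {a b c : S}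
    (h1 : Bisim Tr a b) (h2 : Bisim Tr b c) : Bisim Tr a c := by
  obtain ⟨Q1, hQ1, h1⟩ := h1
  obtain ⟨Q2, hQ2, h2⟩ := h2
  refine ⟨fun x z => ∃ y, Q1 x y ∧ Q2 y z, ?_, b, h1, h2⟩
  rintro x z ⟨y, hxy, hyz⟩
  constructor
  · intro ω x' hx'
    obtain ⟨y', hy', hq1⟩ := (hQ1 x y hxy).1 ω x' hx'
    obtain ⟨z', hz', hq2⟩ := (hQ2 y z hyz).1 ω y' hy'
    exact ⟨z', hz', y', hq1, hq2⟩
  · intro ω z' hz'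
    obtain ⟨y', hy', hq2⟩ := (hQ2 y z hyz).2 ω z' hz'
    obtain ⟨x', hx', hq1⟩ := (hQ1 x y hxy).2 ω y' hy'
    exact ⟨x', hx', y', hq1, hq2⟩

theorem compRel_isBisim {S L : Type*} (Tr : S → L → S → Prop)
    (R : S → S → Prop) (hR : IsBisimUpTo Tr R) :
    IsBisim Tr (CompRel' (Bisim Tr) R) := by
  rintro s t ⟨s', t', hss', hst, ht't⟩
  constructor
  · intro ω s1 hs1
    obtain ⟨s'1, hs'1, hb1⟩ := (bisim_isBisim' Tr s s' hss').1 ω s1 hs1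
    obtain ⟨t'1, ht'1, a, b, hba, hab, hbb⟩ := (hR s' t' hst).1 ω s'1 hs'1
    obtain ⟨t1, ht1, hb2⟩ := (bisim_isBisim' Tr t' t ht't).1 ω t'1 ht'1
    exact ⟨t1, ht1, a, b, bisim_trans' Tr hb1 hba, hab, bisim_trans' Tr hbb hb2⟩
  · intro ω t1 ht1
    obtain ⟨t'1, ht'1, hb2⟩ := (bisim_isBisim' Tr t' t ht't).2 ω t1 ht1
    obtain ⟨s'1, hs'1, a, b, hba, hab, hbb⟩ := (hR s' t' hst).2 ω t'1 ht'1
    obtain ⟨s1, hs1, hb1⟩ := (bisim_isBisim' Tr s s' hss').2 ω s'1 hs'1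
    exact ⟨s1, hs1, a, b, bisim_trans' Tr hb1 hba, hab, bisim_trans' Tr hbb hb2⟩
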